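/- Let A be a C*-algebra and a ∈ A. Then the left conorm γ(a) := γ(L_a), where L_a(x) = a x and γ denotes the reduced minimum modulus, satisfies γ(a)² = inf( σ(a a*) \ {0} ) whenever a a* has nonzero spectrum, where σ denotes the spectrum. -/

import Mathlib

/-- The left conorm of an element `a` of a C*-algebra: the reduced minimum modulus of
the left multiplication operator `L_a : x ↦ a * x`. -/
noncomputable def leftConorm {A : Type*} [NormedRing A] (a : A) : ℝ :=
  sInf ((fun x => ‖a * x‖) '' {x : A | 1 ≤ Metric.infDist x {y : A | a * y = 0}})

set_option linter.unusedSectionVars false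

open Metric in
lemma le_infDist_aux {A : Type*} [MetricSpace A] {s : Set A} (hs : s.Nonempty) {x : A} {b : ℝ}
    (h : ∀ y ∈ s, b ≤ dist x y) : b ≤ Metric.infDist x s := by
  have : Nonempty s := hs.to_subtype
  rw [Metric.infDist_eq_iInf]
  exact le_ciInf fun y => h y y.2

section aux
variable {A : Type*} [NormedRing A] [StarRing A] [CStarRing A]
    [NormedAlgebra ℂ A] [CompleteSpace A] [StarModule ℂ A]

lemma star_ay_ay (a y : A) : star (a * y) * (a * y) = star y * ((star a * a) * y) := by
  rw [star_mul, mul_assoc, mul_assoc]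

lemma ker_char (a y : A) : a * y = 0 ↔ (star a * a) * y = 0 := by
  constructor
  · intro h; rw [mul_assoc, h, mul_zero]
  · intro h
    have h2 : ‖a * y‖ * ‖a * y‖ = 0 := by
      rw [← CStarRing.norm_star_mul_self, star_ay_ay, h, mul_zero, norm_zero]
    rw [← norm_eq_zero]
    exact mul_self_eq_zero.mp h2

lemma key_sq (a x : A) : ‖a * x‖ ^ 2 = ‖star x * ((star a * a) * x)‖ := by
  rw [pow_two, ← CStarRing.norm_star_mul_self, star_ay_ay]

end aux

section aux2
variable {A : Type*} [CStarAlgebra A]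

lemma cfc_ker_absorb (c y : A) (hc : IsSelfAdjoint c) (hy : c * y = 0)
    (k : ℝ → ℝ) (hk : Continuous k) : cfc (fun t => t * k t) c * y = 0 := by
  have h1 : cfc (fun t => t * k t) c = cfc k c * c := by
    have : (fun t : ℝ => t * k t) = fun t => k t * t := funext fun t => mul_comm _ _
    rw [this, cfc_mul k (fun t => t) c hk.continuousOn (continuous_id.continuousOn), cfc_id' ℝ c]
  rw [h1, mul_assoc, hy, mul_zero]

end aux2

/-- In a C*-algebra `A`, the left conorm satisfies
`γ(a)² = inf (σ(a a*) \ {0})` whenever `a a*` has nonzero spectrum. -/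
theorem stmt4 {A : Type*} [NormedRing A] [StarRing A] [CStarRing A]
    [NormedAlgebra ℂ A] [CompleteSpace A] [StarModule ℂ A] (a : A)
    (h : {t : ℝ | (t : ℂ) ∈ spectrum ℂ (a * star a) ∧ t ≠ 0}.Nonempty) :
    (leftConorm a) ^ 2 = sInf {t : ℝ | (t : ℂ) ∈ spectrum ℂ (a * star a) ∧ t ≠ 0} := by
  classical
  letI : CStarAlgebra A := { }
  letI := CStarAlgebra.spectralOrder A
  letI := CStarAlgebra.spectralOrderedRing A
  have hA : Nontrivial A := by
    by_contra hA
    rw [not_nontrivial_iff_subsingleton] at hA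
    obtain ⟨t, ht, -⟩ := h
    exact spectrum.notMem_iff.mpr (isUnit_of_subsingleton _) ht
  set c : A := star a * a with hc_def
  have hc : IsSelfAdjoint c := IsSelfAdjoint.star_mul_self a
  have hc0 : (0:A) ≤ c := star_mul_self_nonneg a
  have hKeq : {t : ℝ | (t : ℂ) ∈ spectrum ℂ (a * star a) ∧ t ≠ 0}
      = {t : ℝ | t ∈ spectrum ℝ c ∧ t ≠ 0} := by
    ext t
    simp only [Set.mem_setOf_eq]
    have swap : (t : ℂ) ∈ spectrum ℂ (a * star a) \ {0} ↔
        (t : ℂ) ∈ spectrum ℂ (star a * a) \ {0} := by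
      rw [spectrum.nonzero_mul_comm]
    have hre : (t : ℂ) ∈ spectrum ℂ c ↔ t ∈ spectrum ℝ c := by
      rw [show ((t : ℂ)) = algebraMap ℝ ℂ t from rfl, spectrum.algebraMap_mem_iff]
    have ht0 : ((t : ℂ) ∈ ({0} : Set ℂ)) ↔ t = 0 := by
      simp [Complex.ofReal_eq_zero]
    constructor
    · rintro ⟨h1, h2⟩
      have := swap.mp ⟨h1, fun hm => h2 (ht0.mp hm)⟩
      exact ⟨hre.mp this.1, h2⟩
    · rintro ⟨h1, h2⟩
      have := swap.mpr ⟨hre.mpr h1, fun hm => h2 (ht0.mp hm)⟩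
      exact ⟨this.1, h2⟩
  rw [hKeq] at h ⊢
  set K : Set ℝ := {t : ℝ | t ∈ spectrum ℝ c ∧ t ≠ 0} with hK_def
  have hKnn : ∀ t ∈ K, 0 ≤ t := fun t ht => spectrum_nonneg_of_nonneg hc0 ht.1
  have hKbdd : BddBelow K := ⟨0, hKnn⟩
  set m : ℝ := sInf K with hm_def
  have hm0 : 0 ≤ m := le_csInf h hKnn
  have hmle : ∀ t ∈ spectrum ℝ c, t ≠ 0 → m ≤ t := fun t h1 h2 => csInf_le hKbdd ⟨h1, h2⟩
  set ker : Set A := {y : A | a * y = 0} with hker_def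
  have hkerne : ker.Nonempty := ⟨0, by simp [hker_def]⟩
  have hkerc : ∀ y, y ∈ ker ↔ c * y = 0 := fun y => ker_char a y
  -- the bump-function construction
  have key_e : ∀ ε > 0, ∃ x : A, 1 ≤ Metric.infDist x ker ∧ ‖a * x‖ ^ 2 ≤ m + ε := by
    intro ε hε
    obtain ⟨t₀, ht₀K, ht₀lt⟩ := exists_lt_of_csInf_lt h (by linarith : m < m + ε/2)
    have ht₀σ := ht₀K.1
    have ht₀pos : 0 < t₀ := lt_of_le_of_ne (hKnn t₀ ht₀K) (Ne.symm ht₀K.2)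
    set δ : ℝ := min (ε/2) (t₀/2) with hδ_def
    have hδpos : 0 < δ := lt_min (by linarith) (by linarith)
    have hδt₀ : 0 < t₀ - δ := by
      have : δ ≤ t₀/2 := min_le_right _ _
      linarith
    set f : ℝ → ℝ := fun t => max 0 (1 - |t - t₀|/δ) with hf_def
    have hf_cont : Continuous f :=
      continuous_const.max
        (continuous_const.sub (((continuous_id.sub continuous_const).abs).div_const δ))
    have hf_nonneg : ∀ t, 0 ≤ f t := fun t => le_max_left _ _
    have hf_le_one : ∀ t, f t ≤ 1 := fun t => by
      apply max_le (by norm_num)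
      have : 0 ≤ |t - t₀|/δ := div_nonneg (abs_nonneg _) hδpos.le
      linarith
    have hf_t₀ : f t₀ = 1 := by simp [hf_def]
    set k : ℝ → ℝ := fun t => f t / max t (t₀ - δ) with hk_def
    have hmaxpos : ∀ t : ℝ, 0 < max t (t₀ - δ) :=
      fun t => lt_of_lt_of_le hδt₀ (le_max_right _ _)
    have hk_cont : Continuous k :=
      hf_cont.div (continuous_id.max continuous_const) (fun t => (hmaxpos t).ne')
    have hfk : ∀ t, t * k t = f t := by
      intro t
      by_cases hcase : t₀ - δ ≤ t
      · have hmax : max t (t₀ - δ) = t := max_eq_left hcase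
        have htpos : 0 < t := lt_of_lt_of_le hδt₀ hcase
        rw [hk_def]
        simp only [hmax]
        field_simp
      · push_neg at hcase
        have habs : |t - t₀| = t₀ - t := by
          rw [abs_of_neg (by linarith)]; ring
        have hft : f t = 0 := by
          apply max_eq_left
          have h1 : 1 < |t - t₀|/δ := (one_lt_div hδpos).mpr (by rw [habs]; linarith)
          linarith
        rw [hk_def]
        simp [hft]
    set e : A := cfc f c with he_def
    have he_sa : IsSelfAdjoint e := cfc_predicate f c
    have hestar : star e = e := he_sa.star_eq
    have he_norm : 1 ≤ ‖e‖ := by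
      have := norm_apply_le_norm_cfc f c ht₀σ hf_cont.continuousOn hc
      rw [hf_t₀] at this
      simpa using this
    have he_ker : ∀ y ∈ ker, e * y = 0 := by
      intro y hy
      rw [he_def, show f = fun t => t * k t from (funext hfk).symm]
      exact cfc_ker_absorb c y hc ((hkerc y).mp hy) k hk_cont
    refine ⟨e, ?_, ?_⟩
    · apply le_infDist_aux hkerne
      intro y hy
      have h1 : e * e = e * (e - y) := by rw [mul_sub, he_ker y hy, sub_zero]
      have h2 : ‖e * e‖ = ‖e‖ * ‖e‖ := by
        rw [← CStarRing.norm_star_mul_self, hestar]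
      have h3 : ‖e * e‖ ≤ ‖e‖ * ‖e - y‖ := h1 ▸ norm_mul_le e (e - y)
      have he_pos : 0 < ‖e‖ := lt_of_lt_of_le one_pos he_norm
      have h4 : ‖e‖ ≤ ‖e - y‖ := by
        rw [h2] at h3
        exact le_of_mul_le_mul_left h3 he_pos
      calc 1 ≤ ‖e‖ := he_norm
        _ ≤ ‖e - y‖ := h4
        _ = dist e y := (dist_eq_norm e y).symm
    · have hδε : δ ≤ ε/2 := min_le_left _ _
      have hgoal : ‖a * e‖ ^ 2 ≤ t₀ + δ := by
        rw [key_sq, ← hc_def]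
        have hee : star e * (c * e) = cfc (fun t => f t * (t * f t)) c := by
          rw [hestar, cfc_mul f (fun t => t * f t) c hf_cont.continuousOn
            ((continuous_id.mul hf_cont).continuousOn),
            cfc_mul (fun t : ℝ => t) f c continuous_id.continuousOn hf_cont.continuousOn,
            cfc_id' ℝ c]
        rw [hee]
        apply norm_cfc_le (by positivity)
        intro t htσ
        have htnn : 0 ≤ t := spectrum_nonneg_of_nonneg hc0 htσ
        by_cases hft : f t = 0
        · rw [hft]
          simp only [zero_mul, mul_zero, norm_zero]
          positivity
        · have habs : |t - t₀| ≤ δ := by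
            by_contra hgt
            push_neg at hgt
            apply hft
            apply max_eq_left
            have h1 : 1 < |t - t₀|/δ := (one_lt_div hδpos).mpr hgt
            linarith
          have htle : t ≤ t₀ + δ := by
            rcases abs_le.mp habs with ⟨_, h2⟩
            linarith
          have h0f := hf_nonneg t
          have h1f := hf_le_one t
          rw [Real.norm_eq_abs, abs_of_nonneg (by positivity)]
          nlinarith [mul_nonneg htnn (mul_nonneg (sub_nonneg.2 h1f) (add_nonneg zero_le_one h0f))]
      linarith
  -- basic facts about the infimum defining leftConorm
  set S : Set ℝ := (fun x => ‖a * x‖) '' {x : A | 1 ≤ Metric.infDist x ker} with hS_def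
  have hγ_def : leftConorm a = sInf S := rfl
  have hSne : S.Nonempty := by
    obtain ⟨x, hx1, -⟩ := key_e 1 one_pos
    exact ⟨‖a * x‖, x, hx1, rfl⟩
  have hSbdd : BddBelow S := ⟨0, by rintro s ⟨x, -, rfl⟩; exact norm_nonneg _⟩
  have hγ0 : 0 ≤ leftConorm a := by
    rw [hγ_def]
    exact le_csInf hSne (by rintro s ⟨x, -, rfl⟩; exact norm_nonneg _)
  -- upper bound : leftConorm a ^ 2 ≤ m
  have hupper : leftConorm a ^ 2 ≤ m := by
    apply le_of_forall_pos_le_add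
    intro ε hε
    obtain ⟨x, hx1, hx2⟩ := key_e ε hε
    have h1 : leftConorm a ≤ ‖a * x‖ := by
      rw [hγ_def]
      exact csInf_le hSbdd ⟨x, hx1, rfl⟩
    calc leftConorm a ^ 2 ≤ ‖a * x‖ ^ 2 := pow_le_pow_left₀ hγ0 h1 2
      _ ≤ m + ε := hx2
  -- lower bound : m ≤ leftConorm a ^ 2
  have hlower : m ≤ leftConorm a ^ 2 := by
    rcases eq_or_lt_of_le hm0 with hm | hm
    · rw [← hm]; positivity
    · -- m > 0 : spectral projection argument
      set f₀ : ℝ → ℝ := fun t => max 0 (min 1 (2 - 2*t/m)) with hf₀_def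
      have hf₀_cont : Continuous f₀ :=
        continuous_const.max (continuous_const.min
          (continuous_const.sub ((continuous_const.mul continuous_id).div_const m)))
      have hf₀_zero : f₀ 0 = 1 := by norm_num [hf₀_def]
      have hf₀_ge : ∀ t, m ≤ t → f₀ t = 0 := by
        intro t ht
        apply max_eq_left
        have h1 : (2:ℝ) ≤ 2*t/m := by
          rw [le_div_iff₀ hm]
          nlinarith
        exact le_trans (min_le_right _ _) (by linarith)
      have hf₀_nonneg : ∀ t, 0 ≤ f₀ t := fun t => le_max_left _ _
      have hf₀_le_one : ∀ t, f₀ t ≤ 1 := fun t => max_le zero_le_one (min_le_left _ _)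
      set g₀ : ℝ → ℝ := fun t => 1 - f₀ t with hg₀_def
      have hg₀_cont : Continuous g₀ := continuous_const.sub hf₀_cont
      set p : A := cfc f₀ c with hp_def
      set q : A := cfc g₀ c with hq_def
      have hp_sa : IsSelfAdjoint p := cfc_predicate f₀ c
      have hσcases : ∀ t ∈ spectrum ℝ c, t = 0 ∨ m ≤ t := by
        intro t ht
        by_cases h0 : t = 0
        · exact Or.inl h0
        · exact Or.inr (hmle t ht h0)
      -- p + q = 1
      have hpq : p + q = 1 := by
        rw [hp_def, hq_def, ← cfc_add c f₀ g₀ hf₀_cont.continuousOn hg₀_cont.continuousOn]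
        have h1 : (fun t => f₀ t + g₀ t) = fun _ : ℝ => (1:ℝ) := by
          funext t
          simp [hg₀_def]
        rw [h1, cfc_const_one ℝ c]
      -- a * p = 0
      have hap : a * p = 0 := by
        have h1 : star p * (c * p) = 0 := by
          have h2 : star p * (c * p) = cfc (fun t => f₀ t * (t * f₀ t)) c := by
            rw [hp_sa.star_eq, hp_def,
              cfc_mul f₀ (fun t => t * f₀ t) c hf₀_cont.continuousOn
                ((continuous_id.mul hf₀_cont).continuousOn),
              cfc_mul (fun t : ℝ => t) f₀ c continuous_id.continuousOn hf₀_cont.continuousOn,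
              cfc_id' ℝ c]
          rw [h2, ← cfc_const_zero ℝ c]
          apply cfc_congr
          intro t ht
          rcases hσcases t ht with h0 | hge
          · simp [h0]
          · simp [hf₀_ge t hge]
        have h3 : ‖a * p‖ ^ 2 = 0 := by
          rw [key_sq, ← hc_def, h1, norm_zero]
        rw [← norm_eq_zero]
        exact pow_eq_zero_iff two_ne_zero |>.mp h3
      -- q kills the kernel
      set k₀ : ℝ → ℝ := fun t => g₀ t / max t (m/2) with hk₀_def
      have hmax₀pos : ∀ t : ℝ, 0 < max t (m/2) :=
        fun t => lt_of_lt_of_le (by linarith) (le_max_right _ _)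
      have hk₀_cont : Continuous k₀ :=
        hg₀_cont.div (continuous_id.max continuous_const) (fun t => (hmax₀pos t).ne')
      have hq_ker : ∀ y ∈ ker, q * y = 0 := by
        intro y hy
        have h1 : q = cfc (fun t => t * k₀ t) c := by
          rw [hq_def]
          apply cfc_congr
          intro t ht
          rcases hσcases t ht with h0 | hge
          · simp [h0, hg₀_def, hf₀_zero]
          · have ht0 : 0 < t := lt_of_lt_of_le hm hge
            have hmax : max t (m/2) = t := max_eq_left (by linarith)
            simp only [hk₀_def, hmax]
            field_simp
        rw [h1]
        exact cfc_ker_absorb c y hc ((hkerc y).mp hy) k₀ hk₀_cont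
      -- q is idempotent
      have hq_idem : q * q = q := by
        conv_lhs => rw [hq_def]
        rw [← cfc_mul g₀ g₀ c hg₀_cont.continuousOn hg₀_cont.continuousOn]
        apply cfc_congr
        intro t ht
        rcases hσcases t ht with h0 | hge
        · simp [h0, hg₀_def, hf₀_zero]
        · simp [hg₀_def, hf₀_ge t hge]
      -- m • q ≤ c
      have hcq : m • q ≤ c := by
        have h1 : (0:A) ≤ cfc (fun t => t - m * g₀ t) c := by
          apply cfc_nonneg
          intro t ht
          rcases hσcases t ht with h0 | hge
          · simp [h0, hg₀_def, hf₀_zero]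
          · have := hf₀_ge t hge
            simp only [hg₀_def, this]
            linarith
        have h2 : cfc (fun t => t - m * g₀ t) c = c - m • q := by
          rw [cfc_sub (fun t : ℝ => t) (fun t => m * g₀ t) c continuous_id.continuousOn
            ((continuous_const.mul hg₀_cont).continuousOn),
            cfc_id' ℝ c, cfc_const_mul m g₀ c hg₀_cont.continuousOn, hq_def]
        rw [h2] at h1
        exact sub_nonneg.mp h1
      -- core estimate
      have core : ∀ x : A, 1 ≤ Metric.infDist x ker → m ≤ ‖a * x‖ ^ 2 := by
        intro x hx
        set y : A := q * x with hy_def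
        have hyq : q * y = y := by rw [hy_def, ← mul_assoc, hq_idem]
        have hx_split : x = p * x + q * x := by rw [← add_mul, hpq, one_mul]
        have hax : a * x = a * y := by
          conv_lhs => rw [hx_split]
          rw [mul_add, ← mul_assoc, hap, zero_mul, zero_add, hy_def]
        have hpx_ker : p * x ∈ ker := by
          rw [hker_def]
          show a * (p * x) = 0
          rw [← mul_assoc, hap, zero_mul]
        have hdist : Metric.infDist x ker ≤ ‖y‖ := by
          calc Metric.infDist x ker ≤ dist x (p * x) := Metric.infDist_le_dist_of_mem hpx_ker
            _ = ‖x - p * x‖ := dist_eq_norm _ _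
            _ = ‖y‖ := by
                congr 1
                rw [hy_def, sub_eq_iff_eq_add, add_comm]
                exact hx_split
        have hy1 : 1 ≤ ‖y‖ := le_trans hx hdist
        have h5 : star y * (m • q) * y ≤ star y * c * y := star_left_conjugate_le_conjugate hcq y
        have h6 : star y * (m • q) * y = m • (star y * y) := by
          rw [mul_smul_comm, smul_mul_assoc]
          congr 1
          rw [mul_assoc, hyq]
        have h8 : (0:A) ≤ m • (star y * y) := smul_nonneg hm0 (star_mul_self_nonneg y)
        have h9 : ‖m • (star y * y)‖ ≤ ‖star y * (c * y)‖ := by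
          have h8' : (0:A) ≤ star y * m • q * y := by rw [h6]; exact h8
          have h9' := CStarAlgebra.norm_le_norm_of_nonneg_of_le h8' h5
          rw [h6] at h9'
          rwa [mul_assoc] at h9'
        have h10 : ‖m • (star y * y)‖ = m * ‖y‖ ^ 2 := by
          rw [norm_smul, Real.norm_of_nonneg hm0, CStarRing.norm_star_mul_self, pow_two]
        have h11 : ‖a * x‖ ^ 2 = ‖star y * (c * y)‖ := by
          rw [hax, key_sq, ← hc_def]
        rw [h11]
        rw [h10] at h9
        have hy2 : 1 ≤ ‖y‖ ^ 2 := by nlinarith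
        have : m * 1 ≤ m * ‖y‖ ^ 2 := mul_le_mul_of_nonneg_left hy2 hm0
        linarith
      -- conclude
      have hsq : Real.sqrt m ≤ leftConorm a := by
        rw [hγ_def]
        apply le_csInf hSne
        rintro s ⟨x, hx, rfl⟩
        have hmx : m ≤ ‖a * x‖ ^ 2 := core x hx
        calc Real.sqrt m ≤ Real.sqrt (‖a * x‖ ^ 2) := Real.sqrt_le_sqrt hmx
          _ = ‖a * x‖ := Real.sqrt_sq (norm_nonneg _)
      calc m = Real.sqrt m ^ 2 := (Real.sq_sqrt hm0).symm
        _ ≤ leftConorm a ^ 2 := pow_le_pow_left₀ (Real.sqrt_nonneg m) hsq 2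
  linarith
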